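/- arXiv:2403.15973 — 2 statements merged into one kernel-verified Lean document; each statement's English description precedes it below -/
import Mathlib

section
/- Let A : [0,2r] → ℝ be smooth, positive on (0,2r), strictly increasing on (0,r], and satisfy A(r+s) ≥ A(r−s) for all s ∈ [0,r]. Let 1 ≤ α ≤ 2 and suppose ∫₀^{r̄} A(s) ds ≤ α ∫₀^r A(s) ds with r̄ ∈ [0,2r]. Then r̄ ≤ α r. -/
open Set intervalIntegral

theorem stmt_0 (r : ℝ) (hr : 0 < r) (A : ℝ → ℝ)
    (hAcont : ContinuousOn A (Icc 0 (2 * r)))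
    (hApos : ∀ s ∈ Ioo 0 (2 * r), 0 < A s)
    (hAmono : StrictMonoOn A (Ioc 0 r))
    (hArefl : ∀ s ∈ Icc 0 r, A (r - s) ≤ A (r + s))
    (α : ℝ) (hα1 : 1 ≤ α) (hα2 : α ≤ 2)
    (rbar : ℝ) (hrbar : rbar ∈ Icc 0 (2 * r))
    (hint : ∫ s in (0:ℝ)..rbar, A s ≤ α * ∫ s in (0:ℝ)..r, A s) :
    rbar ≤ α * r := by
  by_contra hcon
  push_neg at hcon
  set c : ℝ := (α - 1) * r with hc
  have hc0 : 0 ≤ c := mul_nonneg (by linarith) hr.le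
  have hcr : c ≤ r := by nlinarith
  have hInt : ∀ a b : ℝ, a ∈ Icc 0 (2 * r) → b ∈ Icc 0 (2 * r) →
      IntervalIntegrable A MeasureTheory.volume a b := fun a b ha hb =>
    (hAcont.mono (uIcc_subset_Icc ha hb)).intervalIntegrable
  have hMono : MonotoneOn A (Ioc 0 r) := hAmono.monotoneOn
  -- A 0 ≤ A t for t ∈ Ioc 0 r, by continuity from the right
  have hA0 : ∀ t ∈ Ioc 0 r, A 0 ≤ A t := by
    intro t ht
    have hcw : ContinuousWithinAt A (Icc 0 (2 * r)) 0 :=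
      hAcont 0 ⟨le_rfl, by linarith⟩
    have hsub : Ioo 0 t ⊆ Icc 0 (2 * r) := fun x hx =>
      ⟨hx.1.le, by have := hx.2.trans_le ht.2; linarith⟩
    have htend : Filter.Tendsto A (nhdsWithin 0 (Ioo 0 t)) (nhds (A 0)) :=
      hcw.tendsto.mono_left (nhdsWithin_mono 0 hsub)
    haveI : (nhdsWithin (0 : ℝ) (Ioo 0 t)).NeBot := left_nhdsWithin_Ioo_neBot ht.1
    refine le_of_tendsto htend ?_
    filter_upwards [self_mem_nhdsWithin] with x hx
    exact hMono ⟨hx.1, hx.2.le.trans ht.2⟩ ht hx.2.le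
  have h2r : (2 : ℝ) * r ∈ Icc (0 : ℝ) (2 * r) := ⟨by linarith, le_rfl⟩
  have h0m : (0 : ℝ) ∈ Icc (0 : ℝ) (2 * r) := ⟨le_rfl, by linarith⟩
  have hrm : r ∈ Icc (0 : ℝ) (2 * r) := ⟨hr.le, by linarith⟩
  have hαrm : α * r ∈ Icc (0 : ℝ) (2 * r) := ⟨by nlinarith, by nlinarith⟩
  have hrcm : r - c ∈ Icc (0 : ℝ) (2 * r) := ⟨by linarith, by linarith⟩
  -- positivity of the tail integral
  have hpos : 0 < ∫ s in (α * r)..rbar, A s := by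
    refine intervalIntegral_pos_of_pos_on (hInt _ _ hαrm hrbar) ?_ hcon
    intro x hx
    refine hApos x ⟨?_, ?_⟩
    · have : r ≤ α * r := by nlinarith
      linarith [hx.1]
    · exact hx.2.trans_le hrbar.2
  -- splitting
  have hsplit1 : (∫ s in (0:ℝ)..rbar, A s) =
      (∫ s in (0:ℝ)..(α * r), A s) + ∫ s in (α * r)..rbar, A s :=
    (integral_add_adjacent_intervals (hInt _ _ h0m hαrm) (hInt _ _ hαrm hrbar)).symm
  have hsplit2 : (∫ s in (0:ℝ)..(α * r), A s) =
      (∫ s in (0:ℝ)..r, A s) + ∫ s in r..(α * r), A s :=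
    (integral_add_adjacent_intervals (hInt _ _ h0m hrm) (hInt _ _ hrm hαrm)).symm
  -- reflection: ∫_r^{αr} A ≥ ∫_{r-c}^r A
  have hre1 : (∫ s in (0:ℝ)..c, A (r + s)) = ∫ s in r..(α * r), A s := by
    rw [intervalIntegral.integral_comp_add_left A r]
    norm_num
    congr 1
    ring
  have hre2 : (∫ s in (0:ℝ)..c, A (r - s)) = ∫ s in (r - c)..r, A s := by
    rw [intervalIntegral.integral_comp_sub_left A r]
    norm_num
  have hcontp : IntervalIntegrable (fun s => A (r + s)) MeasureTheory.volume 0 c := by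
    apply ContinuousOn.intervalIntegrable
    apply hAcont.comp (Continuous.continuousOn (by continuity))
    intro x hx
    rw [uIcc_of_le hc0] at hx
    exact ⟨by linarith [hx.1], by linarith [hx.2]⟩
  have hcontm : IntervalIntegrable (fun s => A (r - s)) MeasureTheory.volume 0 c := by
    apply ContinuousOn.intervalIntegrable
    apply hAcont.comp (Continuous.continuousOn (by continuity))
    intro x hx
    rw [uIcc_of_le hc0] at hx
    exact ⟨by linarith [hx.2], by linarith [hx.1]⟩
  have hrefl_int : (∫ s in (r - c)..r, A s) ≤ ∫ s in r..(α * r), A s := by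
    rw [← hre1, ← hre2]
    refine integral_mono_on hc0 hcontm hcontp ?_
    intro x hx
    exact hArefl x ⟨hx.1, hx.2.trans hcr⟩
  -- Chebyshev-type bound: r * ∫_{r-c}^r A ≥ c * ∫_0^r A
  have hcheb : c * (∫ s in (0:ℝ)..r, A s) ≤ r * ∫ s in (r - c)..r, A s := by
    rcases eq_or_lt_of_le hcr with hcr' | hcr'
    · rw [hcr']
      simp
    · -- c < r, so r - c ∈ Ioc 0 r
      have hrc : r - c ∈ Ioc 0 r := ⟨by linarith, by linarith⟩
      have h1 : (∫ s in (0:ℝ)..(r - c), A s) ≤ (r - c) * A (r - c) := by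
        have := integral_mono_on (f := A) (g := fun _ => A (r - c)) (by linarith : (0:ℝ) ≤ r - c)
          (hInt _ _ h0m hrcm) intervalIntegrable_const ?_
        · simpa using this
        · intro x hx
          rcases eq_or_lt_of_le hx.1 with h0 | h0
          · rw [← h0]; exact hA0 _ hrc
          · exact hMono ⟨h0, hx.2.trans (by linarith)⟩ hrc hx.2
      have h2 : c * A (r - c) ≤ ∫ s in (r - c)..r, A s := by
        have := integral_mono_on (f := fun _ => A (r - c)) (g := A) (by linarith : r - c ≤ r)
          intervalIntegrable_const (hInt _ _ hrcm hrm) ?_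
        · simpa using this
        · intro x hx
          exact hMono hrc ⟨lt_of_lt_of_le hrc.1 hx.1, hx.2⟩ hx.1
      have hsplit3 : (∫ s in (0:ℝ)..r, A s) =
          (∫ s in (0:ℝ)..(r - c), A s) + ∫ s in (r - c)..r, A s :=
        (integral_add_adjacent_intervals (hInt _ _ h0m hrcm) (hInt _ _ hrcm hrm)).symm
      nlinarith [h1, h2, hsplit3]
  have hαc : α * r = r + c := by rw [hc]; ring
  have hM : c * (∫ s in (0:ℝ)..r, A s) ≤ r * ∫ s in r..(α * r), A s :=
    le_trans hcheb (mul_le_mul_of_nonneg_left hrefl_int hr.le)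
  have hK : r * (∫ s in (0:ℝ)..rbar, A s) ≤ r * (α * ∫ s in (0:ℝ)..r, A s) :=
    mul_le_mul_of_nonneg_left hint hr.le
  have h6 : r * (α * ∫ s in (0:ℝ)..r, A s) =
      r * (∫ s in (0:ℝ)..r, A s) + c * (∫ s in (0:ℝ)..r, A s) := by
    rw [show r * (α * ∫ s in (0:ℝ)..r, A s) = (α * r) * ∫ s in (0:ℝ)..r, A s by ring, hαc]
    ring
  have g1 : r * (∫ s in (0:ℝ)..rbar, A s) =
      r * (∫ s in (0:ℝ)..(α * r), A s) + r * ∫ s in (α * r)..rbar, A s := by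
    rw [hsplit1]; ring
  have g2 : r * (∫ s in (0:ℝ)..(α * r), A s) =
      r * (∫ s in (0:ℝ)..r, A s) + r * ∫ s in r..(α * r), A s := by
    rw [hsplit2]; ring
  have g3 : 0 < r * ∫ s in (α * r)..rbar, A s := mul_pos hr hpos
  linarith
end

section
/- For n ≥ 1, let A(s) = sinh^{n−1}(s) for s ∈ [0,∞). If α ≥ 1 and r, r̄ ≥ 0 satisfy ∫₀^{r̄} A(s) ds ≤ α ∫₀^r A(s) ds, then r̄ ≤ α^{1/n} r. -/
open Set intervalIntegral Real

lemma sinh_mul_le_aux {c t : ℝ} (hc : 1 ≤ c) (ht : 0 ≤ t) :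
    c * Real.sinh t ≤ Real.sinh (c * t) := by
  have hmono : MonotoneOn (fun t => Real.sinh (c * t) - c * Real.sinh t) (Set.Ici 0) := by
    apply monotoneOn_of_deriv_nonneg (convex_Ici 0)
    · exact ((Real.continuous_sinh.comp (continuous_const.mul continuous_id)).sub
        (continuous_const.mul Real.continuous_sinh)).continuousOn
    · intro x _
      exact (((Real.hasDerivAt_sinh (c * x)).comp x
        ((hasDerivAt_id x).const_mul c)).sub
        ((Real.hasDerivAt_sinh x).const_mul c)).differentiableAt.differentiableWithinAt
    · intro x hx
      rw [interior_Ici] at hx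
      have h1 : HasDerivAt (fun t => Real.sinh (c * t)) (Real.cosh (c * x) * (c * 1)) x :=
        (Real.hasDerivAt_sinh (c * x)).comp x ((hasDerivAt_id x).const_mul c)
      have h2 : HasDerivAt (fun t => c * Real.sinh t) (c * Real.cosh x) x :=
        (Real.hasDerivAt_sinh x).const_mul c
      rw [show deriv (fun t => Real.sinh (c * t) - c * Real.sinh t) x = _ from (h1.sub h2).deriv]
      have hx' : (0:ℝ) < x := hx
      have hcc : Real.cosh x ≤ Real.cosh (c * x) := by
        rw [Real.cosh_le_cosh]
        rw [abs_of_pos hx', abs_of_pos (by nlinarith : (0:ℝ) < c * x)]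
        nlinarith
      nlinarith
  have h0 : (0:ℝ) ∈ Set.Ici (0:ℝ) := Set.self_mem_Ici
  have := hmono h0 (Set.mem_Ici.mpr ht) ht
  simp only [mul_zero, Real.sinh_zero] at this
  linarith

theorem stmt_1 (n : ℕ) (hn : 1 ≤ n) (α : ℝ) (hα : 1 ≤ α)
    (r rbar : ℝ) (hr : 0 ≤ r) (hrbar : 0 ≤ rbar)
    (hint : ∫ s in (0:ℝ)..rbar, Real.sinh s ^ (n - 1) ≤
      α * ∫ s in (0:ℝ)..r, Real.sinh s ^ (n - 1)) :
    rbar ≤ α ^ ((1 : ℝ) / n) * r := by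
  set c : ℝ := α ^ ((1 : ℝ) / n) with hcdef
  have hn0 : (n:ℝ) ≠ 0 := Nat.cast_ne_zero.mpr (by omega)
  have hc1 : 1 ≤ c := Real.one_le_rpow hα (by positivity)
  have hc0 : 0 < c := lt_of_lt_of_le one_pos hc1
  have hcn : c ^ n = α := by
    rw [hcdef, ← Real.rpow_natCast (α ^ ((1:ℝ)/n)) n, ← Real.rpow_mul (by linarith)]
    rw [one_div_mul_cancel hn0, Real.rpow_one]
  have hcont : Continuous fun s : ℝ => Real.sinh s ^ (n - 1) :=
    Real.continuous_sinh.pow _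
  -- substitution: F(c*r) = c * ∫ t in 0..r, sinh(t*c)^(n-1)
  have hsub : (∫ s in (0:ℝ)..c * r, Real.sinh s ^ (n - 1))
      = c * ∫ t in (0:ℝ)..r, Real.sinh (t * c) ^ (n - 1) := by
    rw [intervalIntegral.integral_comp_mul_right (fun s => Real.sinh s ^ (n-1)) (ne_of_gt hc0)]
    rw [smul_eq_mul, ← mul_assoc, mul_inv_cancel₀ (ne_of_gt hc0), one_mul, zero_mul, mul_comm r c]
  have hptwise : ∀ t ∈ Set.Icc (0:ℝ) r,
      c ^ (n-1) * Real.sinh t ^ (n-1) ≤ Real.sinh (t * c) ^ (n-1) := by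
    intro t ht
    rw [← mul_pow]
    apply pow_le_pow_left₀ (mul_nonneg (by linarith) (Real.sinh_nonneg_iff.mpr ht.1))
    rw [mul_comm t c]
    exact sinh_mul_le_aux hc1 ht.1
  have hmono_int : c ^ (n-1) * (∫ s in (0:ℝ)..r, Real.sinh s ^ (n-1))
      ≤ ∫ t in (0:ℝ)..r, Real.sinh (t * c) ^ (n - 1) := by
    rw [← intervalIntegral.integral_const_mul]
    apply intervalIntegral.integral_mono_on hr
    · exact (continuous_const.mul hcont).intervalIntegrable _ _
    · exact ((Real.continuous_sinh.comp (continuous_id.mul continuous_const)).pow _).intervalIntegrable _ _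
    · exact hptwise
  have hkey : α * (∫ s in (0:ℝ)..r, Real.sinh s ^ (n-1))
      ≤ ∫ s in (0:ℝ)..c * r, Real.sinh s ^ (n - 1) := by
    rw [hsub, ← hcn]
    calc c ^ n * (∫ s in (0:ℝ)..r, Real.sinh s ^ (n-1))
        = c * (c ^ (n-1) * ∫ s in (0:ℝ)..r, Real.sinh s ^ (n-1)) := by
          rw [← mul_assoc, ← pow_succ']
          congr 2
          omega
      _ ≤ c * ∫ t in (0:ℝ)..r, Real.sinh (t * c) ^ (n - 1) := by
          exact mul_le_mul_of_nonneg_left hmono_int (le_of_lt hc0)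
  have hfinal : (∫ s in (0:ℝ)..rbar, Real.sinh s ^ (n - 1))
      ≤ ∫ s in (0:ℝ)..c * r, Real.sinh s ^ (n - 1) := le_trans hint hkey
  by_contra h
  push_neg at h
  have hcr : 0 ≤ c * r := by positivity
  have hadd : (∫ s in (0:ℝ)..c*r, Real.sinh s ^ (n-1))
      + (∫ s in (c*r)..rbar, Real.sinh s ^ (n-1))
      = ∫ s in (0:ℝ)..rbar, Real.sinh s ^ (n-1) :=
    intervalIntegral.integral_add_adjacent_intervals
      (hcont.intervalIntegrable _ _) (hcont.intervalIntegrable _ _)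
  have hpos : 0 < ∫ s in (c*r)..rbar, Real.sinh s ^ (n-1) := by
    apply intervalIntegral.intervalIntegral_pos_of_pos_on (hcont.intervalIntegrable _ _)
    · intro x hx
      have hx0 : 0 < x := lt_of_le_of_lt hcr hx.1
      exact pow_pos (Real.sinh_pos_iff.mpr hx0) _
    · exact h
  linarith
end
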